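/- Let R = K[x_1,...,x_n, y_1,...,y_n] and let w_1,...,w_n be positive integers. Let I_{n-1} = (x_i y_j^{w_j} : 1 ≤ i,j ≤ n-1, i ≠ j), A = (y_1^{w_1},...,y_{n-1}^{w_{n-1}}), B = (x_1,...,x_{n-1}). Then the ideal intersection (I_{n-1} + x_n·A) ∩ y_n^{w_n}·B equals y_n^{w_n}·(I_{n-1} + (x_n x_1 y_1^{w_1}, ..., x_n x_{n-1} y_{n-1}^{w_{n-1}})). -/

import Mathlib

open MvPolynomial

namespace Stmt4Aux

local infixl:70 " /ᵐᵒⁿ " => MvPolynomial.divMonomial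

variable {σ K : Type*} [CommRing K]

lemma divMonomial_mul_monomial_disj (c : MvPolynomial σ K) (d t : σ →₀ ℕ)
    (h : ∀ u, d u = 0 ∨ t u = 0) :
    (c * monomial t 1) /ᵐᵒⁿ d = (c /ᵐᵒⁿ d) * monomial t 1 := by
  ext μ
  simp only [coeff_divMonomial, coeff_mul_monomial']
  have hle : t ≤ d + μ ↔ t ≤ μ := by
    simp only [Finsupp.le_def, Finsupp.add_apply]
    constructor
    · intro hh u
      rcases h u with h' | h'
      · have := hh u; omega
      · simp [h']
    · intro hh u
      have := hh u; omega
  by_cases ht : t ≤ μ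
  · have harith : d + μ - t = d + (μ - t) := by
      ext u
      have h2 : t u ≤ μ u := Finsupp.le_def.mp ht u
      simp only [Finsupp.tsub_apply, Finsupp.add_apply]
      omega
    rw [if_pos (hle.mpr ht), if_pos ht, harith]
  · rw [if_neg (fun hc => ht (hle.mp hc)), if_neg ht]

lemma mem_span_of_monomial_mul (S : Set (MvPolynomial σ K)) (d : σ →₀ ℕ)
    (hS : ∀ s ∈ S, ∃ t : σ →₀ ℕ, (∀ u, d u = 0 ∨ t u = 0) ∧ s = monomial t 1)
    {g : MvPolynomial σ K} (h : monomial d 1 * g ∈ Ideal.span S) :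
    g ∈ Ideal.span S := by
  obtain ⟨c, hsupp, hsum⟩ := Submodule.mem_span_set.mp h
  have hg : g = (monomial d 1 * g) /ᵐᵒⁿ d := (divMonomial_monomial_mul d g).symm
  rw [hg, ← hsum, Finsupp.sum]
  have hmap : (∑ s ∈ c.support, c s • s) /ᵐᵒⁿ d = ∑ s ∈ c.support, (c s • s) /ᵐᵒⁿ d :=
    map_sum (AddMonoidHom.mk' (fun p => p /ᵐᵒⁿ d) (fun a b => add_divMonomial a b d)) _ _
  rw [hmap]
  refine Ideal.sum_mem _ (fun s hs => ?_)
  obtain ⟨t, htd, hst⟩ := hS s (hsupp hs)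
  rw [smul_eq_mul, hst, divMonomial_mul_monomial_disj _ _ _ htd, ← hst]
  exact Ideal.mul_mem_left _ _ (Ideal.subset_span (hsupp hs))

lemma inf_le_mul_of_retract {R : Type*} [CommRing R] (D B : Ideal R) (S : Set R)
    (hD : D = Ideal.span S) (π : R →+* R) (hπS : ∀ s ∈ S, π s = s)
    (hπB : ∀ b ∈ B, π b = 0) (hsub : ∀ f, f - π f ∈ B) : D ⊓ B ≤ D * B := by
  have main : ∀ f ∈ D, f - π f ∈ D * B ∧ π f ∈ D := by
    intro f hf
    rw [hD] at hf
    refine Submodule.span_induction ?_ ?_ ?_ ?_ hf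
    · intro s hs
      refine ⟨by rw [hπS s hs, sub_self]; exact zero_mem _, ?_⟩
      rw [hπS s hs, hD]
      exact Ideal.subset_span hs
    · exact ⟨by simp, by simp⟩
    · rintro x y hx hy ⟨h1, h2⟩ ⟨h1', h2'⟩
      refine ⟨?_, ?_⟩
      · have hrw : x + y - π (x + y) = (x - π x) + (y - π y) := by rw [map_add]; ring
        rw [hrw]; exact add_mem h1 h1'
      · rw [map_add]; exact add_mem h2 h2'
    · rintro r x hx ⟨h1, h2⟩
      constructor
      · have hrw : r • x - π (r • x) = r * (x - π x) + π x * (r - π r) := by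
          rw [smul_eq_mul, map_mul]; ring
        rw [hrw]
        exact add_mem (Ideal.mul_mem_left _ _ h1) (Ideal.mul_mem_mul h2 (hsub r))
      · rw [smul_eq_mul, map_mul]
        exact Ideal.mul_mem_left _ _ h2
  rintro f ⟨hfD, hfB⟩
  have h := (main f hfD).1
  rwa [hπB f hfB, sub_zero] at h

end Stmt4Aux

open Stmt4Aux

theorem stmt4 {K : Type} [Field K] (n : ℕ) (w : Fin (n + 1) → ℕ) (hw : ∀ j, 1 ≤ w j)
    (I A B C : Ideal (MvPolynomial (Fin (n + 1) ⊕ Fin (n + 1)) K))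
    (hI : I = Ideal.span {p | ∃ i j : Fin n, i ≠ j ∧
      p = X (Sum.inl i.castSucc) * X (Sum.inr j.castSucc) ^ w j.castSucc})
    (hA : A = Ideal.span {p | ∃ j : Fin n, p = X (Sum.inr j.castSucc) ^ w j.castSucc})
    (hB : B = Ideal.span {p | ∃ i : Fin n, p = X (Sum.inl i.castSucc)})
    (hC : C = I + Ideal.span {p | ∃ j : Fin n,
      p = X (Sum.inl (Fin.last n)) * X (Sum.inl j.castSucc) *
        X (Sum.inr j.castSucc) ^ w j.castSucc}) :
    (I + Ideal.span {X (Sum.inl (Fin.last n))} * A) ⊓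
        (Ideal.span {X (Sum.inr (Fin.last n)) ^ w (Fin.last n)} * B) =
      Ideal.span {X (Sum.inr (Fin.last n)) ^ w (Fin.last n)} * C := by
  classical
  let ι := (Fin (n + 1) ⊕ Fin (n + 1))
  let R := MvPolynomial ι K
  set xl : R := X (Sum.inl (Fin.last n)) with hxl
  set SI : Set R := {p | ∃ i j : Fin n, i ≠ j ∧
      p = X (Sum.inl i.castSucc) * X (Sum.inr j.castSucc) ^ w j.castSucc} with hSI
  set SD : Set R := {p | ∃ j : Fin n,
      p = xl * X (Sum.inr j.castSucc) ^ w j.castSucc} with hSD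
  have hne : ∀ j : Fin n, (j.castSucc : Fin (n + 1)) ≠ Fin.last n :=
    fun j => (Fin.castSucc_lt_last j).ne
  have hXX : ∀ (a b : ι) (e : ℕ), (X a * X b ^ e : R) =
      monomial (Finsupp.single a 1 + Finsupp.single b e) (1 : K) := by
    intro a b e
    rw [← pow_one (X a), X_pow_eq_monomial, X_pow_eq_monomial, monomial_mul, one_mul]
  -- D = xl * A as a span
  have hDset : Ideal.span {xl} * A = Ideal.span SD := by
    rw [hA, Ideal.span_mul_span']
    congr 1
    ext p
    constructor
    · rintro ⟨a, ha, b, hb, rfl⟩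
      rw [Set.mem_singleton_iff] at ha
      obtain ⟨j, rfl⟩ := hb
      exact ⟨j, by rw [ha]⟩
    · rintro ⟨j, rfl⟩
      exact ⟨xl, rfl, _, ⟨j, rfl⟩, rfl⟩
  have hJ : I + Ideal.span {xl} * A = Ideal.span (SI ∪ SD) := by
    rw [hI, hDset, Ideal.span_union, Submodule.add_eq_sup]
  have hIB : I ≤ B := by
    rw [hI, Ideal.span_le]
    rintro p ⟨i, j, hij, rfl⟩
    exact Ideal.mul_mem_right _ _ (hB ▸ Ideal.subset_span ⟨i, rfl⟩)
  -- the retraction π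
  set πm : ι → R := Sum.elim
    (fun i => if i = Fin.last n then X (Sum.inl i) else 0) (fun j => X (Sum.inr j)) with hπm
  set π : R →+* R := (aeval πm : R →ₐ[K] R).toRingHom with hπ
  have hπX : ∀ u : ι, π (X u) = πm u := fun u => aeval_X πm u
  have hπS : ∀ s ∈ SD, π s = s := by
    rintro s ⟨j, rfl⟩
    rw [map_mul, map_pow, hxl, hπX, hπX, hπm]
    simp
  have hπB : ∀ b ∈ B, π b = 0 := by
    have hker : B ≤ RingHom.ker π := by
      rw [hB, Ideal.span_le]
      rintro p ⟨i, rfl⟩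
      rw [SetLike.mem_coe, RingHom.mem_ker, hπX, hπm]
      simp [hne i]
    exact fun b hb => hker hb
  have hsub : ∀ f : R, f - π f ∈ B := by
    intro f
    induction f using MvPolynomial.induction_on with
    | C a =>
      have h1 : π (MvPolynomial.C a) = MvPolynomial.C a := by
        rw [hπ]; show (aeval πm) (MvPolynomial.C a) = _; rw [aeval_C, MvPolynomial.algebraMap_eq]
      rw [h1, sub_self]
      exact Submodule.zero_mem B
    | add p q hp hq =>
      have hrw : p + q - π (p + q) = (p - π p) + (q - π q) := by rw [map_add]; ring
      rw [hrw]; exact add_mem hp hq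
    | mul_X p u hp =>
      cases u with
      | inl i =>
        by_cases hi : i = Fin.last n
        · subst hi
          have hrw : p * X (Sum.inl (Fin.last n)) - π (p * X (Sum.inl (Fin.last n))) =
              (p - π p) * X (Sum.inl (Fin.last n)) := by
            rw [map_mul, hπX, hπm]; simp; ring
          rw [hrw]; exact Ideal.mul_mem_right _ _ hp
        · have hrw : p * X (Sum.inl i) - π (p * X (Sum.inl i)) = p * X (Sum.inl i) := by
            rw [map_mul, hπX, hπm]; simp [hi]
          rw [hrw]
          obtain ⟨i', rfl⟩ := Fin.exists_castSucc_eq.mpr hi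
          exact Ideal.mul_mem_left _ _ (hB ▸ Ideal.subset_span ⟨i', rfl⟩)
      | inr j =>
        have hrw : p * X (Sum.inr j) - π (p * X (Sum.inr j)) = (p - π p) * X (Sum.inr j) := by
          rw [map_mul, hπX, hπm]; simp; ring
        rw [hrw]; exact Ideal.mul_mem_right _ _ hp
  have hDB : Ideal.span {xl} * A ⊓ B ≤ (Ideal.span {xl} * A) * B :=
    inf_le_mul_of_retract _ _ SD hDset π hπS hπB hsub
  have hDBC : (Ideal.span {xl} * A) * B ≤ C := by
    rw [hDset, hB, Ideal.span_mul_span', Ideal.span_le]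
    rintro p hp
    rw [Set.mem_mul] at hp
    obtain ⟨s, ⟨j, rfl⟩, t, ⟨i, rfl⟩, rfl⟩ := hp
    rcases eq_or_ne i j with rfl | hij
    · have hrw : xl * X (Sum.inr i.castSucc) ^ w i.castSucc * X (Sum.inl i.castSucc) =
          xl * X (Sum.inl i.castSucc) * X (Sum.inr i.castSucc) ^ w i.castSucc := by ring
      rw [SetLike.mem_coe, hC, Submodule.add_eq_sup, hrw]
      exact Submodule.mem_sup_right (Ideal.subset_span ⟨i, rfl⟩)
    · have hrw : xl * X (Sum.inr j.castSucc) ^ w j.castSucc * X (Sum.inl i.castSucc) =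
          (X (Sum.inl i.castSucc) * X (Sum.inr j.castSucc) ^ w j.castSucc) * xl := by ring
      rw [SetLike.mem_coe, hC, Submodule.add_eq_sup, hrw]
      exact Submodule.mem_sup_left
        (hI ▸ Ideal.mul_mem_right _ _ (Ideal.subset_span ⟨i, j, hij, rfl⟩))
  have hCB : C ≤ B := by
    rw [hC, Submodule.add_eq_sup]
    refine sup_le hIB ?_
    rw [Ideal.span_le]
    rintro p ⟨j, rfl⟩
    have hrw : xl * X (Sum.inl j.castSucc) * X (Sum.inr j.castSucc) ^ w j.castSucc =
        X (Sum.inl j.castSucc) * (xl * X (Sum.inr j.castSucc) ^ w j.castSucc) := by ring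
    rw [SetLike.mem_coe, hrw]
    exact Ideal.mul_mem_right _ _ (hB ▸ Ideal.subset_span ⟨j, rfl⟩)
  have hCJ : C ≤ I + Ideal.span {xl} * A := by
    rw [hC, Submodule.add_eq_sup, Submodule.add_eq_sup]
    refine sup_le le_sup_left (le_trans ?_ le_sup_right)
    rw [Ideal.span_le]
    rintro p ⟨j, rfl⟩
    rw [SetLike.mem_coe, Ideal.mem_span_singleton_mul]
    exact ⟨X (Sum.inl j.castSucc) * X (Sum.inr j.castSucc) ^ w j.castSucc,
      Ideal.mul_mem_left _ _ (hA ▸ Ideal.subset_span ⟨j, rfl⟩), by ring⟩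
  refine le_antisymm ?_ (le_inf ?_ (Ideal.mul_mono_right hCB))
  · rintro f ⟨hfJ, hfm⟩
    rw [SetLike.mem_coe] at hfJ hfm
    rw [Ideal.mem_span_singleton_mul] at hfm
    obtain ⟨b, hbB, rfl⟩ := hfm
    -- colon step: b ∈ I + xl*A
    rw [hJ, X_pow_eq_monomial] at hfJ
    have hgens : ∀ s ∈ SI ∪ SD, ∃ t : ι →₀ ℕ,
        (∀ u, Finsupp.single (Sum.inr (Fin.last n) : ι) (w (Fin.last n)) u = 0 ∨ t u = 0) ∧
        s = monomial t 1 := by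
      rintro s (⟨i, j, hij, rfl⟩ | ⟨j, rfl⟩)
      · refine ⟨_, ?_, hXX _ _ _⟩
        intro u
        rcases eq_or_ne u (Sum.inr (Fin.last n) : ι) with rfl | hu
        · right
          rw [Finsupp.add_apply, Finsupp.single_apply, Finsupp.single_apply,
            if_neg (fun h => Sum.inl_ne_inr h), if_neg (fun h => hne j (Sum.inr.inj h))]
          rfl
        · left; simp [Finsupp.single_apply, Ne.symm hu]
      · refine ⟨_, ?_, hXX _ _ _⟩
        intro u
        rcases eq_or_ne u (Sum.inr (Fin.last n) : ι) with rfl | hu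
        · right
          rw [Finsupp.add_apply, Finsupp.single_apply, Finsupp.single_apply,
            if_neg (fun h => Sum.inl_ne_inr h), if_neg (fun h => hne j (Sum.inr.inj h))]
          rfl
        · left; simp [Finsupp.single_apply, Ne.symm hu]
    have hbJ : b ∈ Ideal.span (SI ∪ SD) := mem_span_of_monomial_mul _ _ hgens hfJ
    rw [← hJ, Submodule.add_eq_sup] at hbJ
    obtain ⟨p, hpI, q, hqD, hpq⟩ := Submodule.mem_sup.mp hbJ
    have hqB : q ∈ B := by
      have : q = b - p := by rw [← hpq]; ring
      rw [this]
      exact Submodule.sub_mem _ hbB (hIB hpI)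
    have hpC : p ∈ C := by
      rw [hC, Submodule.add_eq_sup]
      exact Submodule.mem_sup_left hpI
    have hqC : q ∈ C := hDBC (hDB (Submodule.mem_inf.mpr ⟨hqD, hqB⟩))
    have hbC : b ∈ C := by
      rw [← hpq]
      exact Ideal.add_mem _ hpC hqC
    exact Ideal.mem_span_singleton_mul.mpr ⟨b, hbC, rfl⟩
  · exact le_trans (Ideal.mul_mono_right hCJ) Ideal.mul_le_right
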